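/- For K ∈ Ω^{k+1}(M;TM), the operator i^h(K) commutes with h*, i.e. [i^h(K), h*] = i^h(K)∘h* − h*∘i^h(K) = 0, if and only if h∘K = K∘Λ^{k+1}h : Λ^{k+1}TM → TM. -/

import Mathlib

/-!
Graded derivations of the algebra of differential forms associated with a connection
(P. Michor).  We model vector fields on a smooth manifold `M` as derivations of the
commutative `ℝ`-algebra `A = C^∞(M, ℝ)` (realized inside `Module.End ℝ A`), and
differential forms (scalar valued, resp. tangent-bundle valued) as functions on lists of
vector fields which are alternating `A`-multilinear of a fixed degree.  All the operators
of the Frölicher-Nijenhuis calculus are defined by their classical global formulas.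
-/

noncomputable section

open scoped Manifold

variable (A : Type*) [CommRing A] [Algebra ℝ A]

/-- The carrier in which vector fields live: `ℝ`-linear endomorphisms of the functions. -/
abbrev Vec := Module.End ℝ A

/-- A vector field is a derivation of the algebra of (smooth) functions. -/
def IsVectorField (X : Vec A) : Prop := ∀ f g : A, X (f * g) = f * X g + g * X f

/-- Raw scalar differential forms: functions on lists of vector fields. -/
abbrev SF := List (Vec A) → A

/-- Raw tangent-bundle valued differential forms. -/
abbrev VF := List (Vec A) → Vec A

/-- All members of the list are genuine vector fields. -/
def VFList (ℓ : List (Vec A)) : Prop := ∀ X ∈ ℓ, IsVectorField A X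

/-- `ω` is a (scalar valued) differential `p`-form: it is supported on lists of length
`p`, it is `A`-multilinear and alternating (on vector fields). -/
structure IsSForm (p : ℕ) (ω : SF A) : Prop where
  support : ∀ ℓ, ℓ.length ≠ p → ω ℓ = 0
  map_add : ∀ l₁ (X Y : Vec A) l₂, VFList A l₁ → VFList A l₂ →
    IsVectorField A X → IsVectorField A Y →
    ω (l₁ ++ (X + Y) :: l₂) = ω (l₁ ++ X :: l₂) + ω (l₁ ++ Y :: l₂)
  map_smul : ∀ l₁ (f : A) (X : Vec A) l₂, VFList A l₁ → VFList A l₂ →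
    IsVectorField A X → ω (l₁ ++ (f • X) :: l₂) = f * ω (l₁ ++ X :: l₂)
  alternate : ∀ l₁ (X : Vec A) l₂ l₃, VFList A l₁ → VFList A l₂ → VFList A l₃ →
    IsVectorField A X → ω (l₁ ++ X :: l₂ ++ X :: l₃) = 0

/-- `K` is a tangent-bundle valued differential `p`-form, `K ∈ Ω^p(M; TM)`. -/
structure IsVForm (p : ℕ) (K : VF A) : Prop where
  support : ∀ ℓ, ℓ.length ≠ p → K ℓ = 0
  map_add : ∀ l₁ (X Y : Vec A) l₂, VFList A l₁ → VFList A l₂ →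
    IsVectorField A X → IsVectorField A Y →
    K (l₁ ++ (X + Y) :: l₂) = K (l₁ ++ X :: l₂) + K (l₁ ++ Y :: l₂)
  map_smul : ∀ l₁ (f : A) (X : Vec A) l₂, VFList A l₁ → VFList A l₂ →
    IsVectorField A X → K (l₁ ++ (f • X) :: l₂) = f • K (l₁ ++ X :: l₂)
  alternate : ∀ l₁ (X : Vec A) l₂ l₃, VFList A l₁ → VFList A l₂ → VFList A l₃ →
    IsVectorField A X → K (l₁ ++ X :: l₂ ++ X :: l₃) = 0
  vec : ∀ ℓ, VFList A ℓ → IsVectorField A (K ℓ)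

/-- A connection for a sub vector bundle `F ⊆ TM`:  a fiber linear projection
`φ : TM → F`, i.e. an idempotent `A`-linear operator on vector fields (whose image is the
space of sections of `F`). -/
structure IsConnection (φ : Vec A → Vec A) : Prop where
  vf : ∀ X, IsVectorField A X → IsVectorField A (φ X)
  idem : ∀ X, IsVectorField A X → φ (φ X) = φ X
  map_add : ∀ X Y, IsVectorField A X → IsVectorField A Y → φ (X + Y) = φ X + φ Y
  map_smul : ∀ (f : A) (X : Vec A), IsVectorField A X → φ (f • X) = f • φ X

/-- The horizontal projection `h = Id - φ` of a connection `φ`. -/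
def hpr (φ : Vec A → Vec A) : Vec A → Vec A := fun X => X - φ X

/-- A bundle endomorphism of `TM` (e.g. `φ` or `h`) viewed as a `1`-form in `Ω¹(M;TM)`. -/
def oneF (φ : Vec A → Vec A) : VF A := fun ℓ => match ℓ with
  | [X] => φ X
  | _ => 0

/-- The curvature `R ∈ Ω²(M;TM)` of the connection, `R(X,Y) = φ [hX, hY]`. -/
def curv (φ : Vec A → Vec A) : VF A := fun ℓ => match ℓ with
  | [X, Y] => φ ⁅hpr A φ X, hpr A φ Y⁆
  | _ => 0

/-- The cocurvature `R̄ ∈ Ω²(M;TM)` of the connection, `R̄(X,Y) = h [φX, φY]`. -/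
def cocurv (φ : Vec A → Vec A) : VF A := fun ℓ => match ℓ with
  | [X, Y] => hpr A φ ⁅φ X, φ Y⁆
  | _ => 0

/-- `h* : Ω(M) → Ω(M)`, `(h*ω)(X₁,…,X_p) = ω(hX₁,…,hX_p)`. -/
def hstar (φ : Vec A → Vec A) : SF A →ₗ[ℝ] SF A :=
  LinearMap.pi fun ℓ => LinearMap.proj (ℓ.map (hpr A φ))

/-- The exterior derivative, by the global (Koszul) formula. -/
def extd : SF A →ₗ[ℝ] SF A :=
  LinearMap.pi fun ℓ =>
    (∑ i : Fin ℓ.length, ((-1 : ℝ) ^ (i : ℕ)) •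
      ((ℓ.get i) ∘ₗ (LinearMap.proj (ℓ.eraseIdx (i : ℕ)) : SF A →ₗ[ℝ] A)))
    + ∑ i : Fin ℓ.length,
        ∑ j ∈ Finset.univ.filter (fun j : Fin ℓ.length => (i : ℕ) < (j : ℕ)),
          ((-1 : ℝ) ^ ((i : ℕ) + (j : ℕ))) •
            (LinearMap.proj ((⁅ℓ.get i, ℓ.get j⁆ : Vec A) ::
              ((ℓ.eraseIdx (j : ℕ)).eraseIdx (i : ℕ))) : SF A →ₗ[ℝ] A)

/-- The insertion operator `i(K) : Ω^p(M) → Ω^{p+k-1}(M)` of `K ∈ Ω^k(M;TM)`: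
`(i(K)ω)(X₁,…,X_n) = 1/(k! (n-k)!) ∑_σ ε(σ) ω(K(X_{σ1},…,X_{σk}), X_{σ(k+1)},…)`. -/
def insS (k : ℕ) (K : VF A) : SF A →ₗ[ℝ] SF A :=
  LinearMap.pi fun ℓ =>
    if hk : k ≤ ℓ.length then
      (((k.factorial * (ℓ.length - k).factorial : ℕ) : ℝ))⁻¹ •
        ∑ σ : Equiv.Perm (Fin ℓ.length),
          (((Equiv.Perm.sign σ : ℤ) : ℝ)) •
            (LinearMap.proj
              ((K (List.ofFn fun m : Fin k => ℓ.get (σ (Fin.castLE hk m)))) ::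
                List.ofFn fun m : Fin (ℓ.length - k) =>
                  ℓ.get (σ ⟨k + (m : ℕ), by have := m.isLt; omega⟩)) : SF A →ₗ[ℝ] A)
    else 0

/-- The insertion operator over `h*`:  `i^h(K)` of `K ∈ Ω^k(M;TM)`, given by
`(i^h(K)ω)(X₁,…,X_n) = 1/(k! (n-k)!) ∑_σ ε(σ) ω(K(X_{σ1},…,X_{σk}), hX_{σ(k+1)},…)`. -/
def insH (φ : Vec A → Vec A) (k : ℕ) (K : VF A) : SF A →ₗ[ℝ] SF A :=
  LinearMap.pi fun ℓ =>
    if hk : k ≤ ℓ.length then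
      (((k.factorial * (ℓ.length - k).factorial : ℕ) : ℝ))⁻¹ •
        ∑ σ : Equiv.Perm (Fin ℓ.length),
          (((Equiv.Perm.sign σ : ℤ) : ℝ)) •
            (LinearMap.proj
              ((K (List.ofFn fun m : Fin k => ℓ.get (σ (Fin.castLE hk m)))) ::
                List.ofFn fun m : Fin (ℓ.length - k) =>
                  hpr A φ (ℓ.get (σ ⟨k + (m : ℕ), by have := m.isLt; omega⟩))) : SF A →ₗ[ℝ] A)
    else 0

/-- Insertion `i(K)T` of `K ∈ Ω^k(M;TM)` into a vector valued form `T`. -/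
def insVV (k : ℕ) (K : VF A) (T : VF A) : VF A := fun ℓ =>
  if hk : k ≤ ℓ.length then
    (((k.factorial * (ℓ.length - k).factorial : ℕ) : ℝ))⁻¹ •
      ∑ σ : Equiv.Perm (Fin ℓ.length),
        (((Equiv.Perm.sign σ : ℤ) : ℝ)) •
          T ((K (List.ofFn fun m : Fin k => ℓ.get (σ (Fin.castLE hk m)))) ::
              List.ofFn fun m : Fin (ℓ.length - k) =>
                ℓ.get (σ ⟨k + (m : ℕ), by have := m.isLt; omega⟩))
  else 0

/-- Insertion over `h*`, `i^h(K)T`, of `K ∈ Ω^k(M;TM)` into a vector valued form `T`. -/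
def insHVV (φ : Vec A → Vec A) (k : ℕ) (K : VF A) (T : VF A) : VF A := fun ℓ =>
  if hk : k ≤ ℓ.length then
    (((k.factorial * (ℓ.length - k).factorial : ℕ) : ℝ))⁻¹ •
      ∑ σ : Equiv.Perm (Fin ℓ.length),
        (((Equiv.Perm.sign σ : ℤ) : ℝ)) •
          T ((K (List.ofFn fun m : Fin k => ℓ.get (σ (Fin.castLE hk m)))) ::
              List.ofFn fun m : Fin (ℓ.length - k) =>
                hpr A φ (ℓ.get (σ ⟨k + (m : ℕ), by have := m.isLt; omega⟩)))
  else 0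

/-- The Lie derivative `Θ(K) = [i(K), d]` along `K ∈ Ω^k(M;TM)`. -/
def theta (k : ℕ) (K : VF A) : SF A →ₗ[ℝ] SF A :=
  insS A k K ∘ₗ extd A - ((-1 : ℝ) ^ (k + 1)) • (extd A ∘ₗ insS A k K)

/-- `Θ^h(K) = h* ∘ Θ(K) ∘ h*`. -/
def thetaH (φ : Vec A → Vec A) (k : ℕ) (K : VF A) : SF A →ₗ[ℝ] SF A :=
  hstar A φ ∘ₗ theta A k K ∘ₗ hstar A φ

/-- A function, viewed as a `0`-form. -/
def constF : A →ₗ[ℝ] SF A where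
  toFun f := fun ℓ => match ℓ with
    | [] => f
    | _ => 0
  map_add' f g := by funext ℓ; cases ℓ <;> simp
  map_smul' r f := by funext ℓ; cases ℓ <;> simp

/-- The Frölicher-Nijenhuis bracket `[K, L] ∈ Ω^{k+l}(M;TM)` of `K ∈ Ω^k(M;TM)` and
`L ∈ Ω^l(M;TM)`, characterized by `Θ([K,L]) = [Θ(K), Θ(L)]` via
`[K,L](X₁,…,X_{k+l}) f = ([Θ(K),Θ(L)] f)(X₁,…,X_{k+l})`. -/
def fnb (k l : ℕ) (K L : VF A) : VF A := fun ℓ =>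
  LinearMap.proj ℓ ∘ₗ
    (theta A k K ∘ₗ theta A l L - ((-1 : ℝ) ^ (k * l)) • (theta A l L ∘ₗ theta A k K)) ∘ₗ
      constF A

/-- Wedge product of a scalar `p`-form with a scalar form. -/
def wedgeSS (p : ℕ) (ω ψ : SF A) : SF A := fun ℓ =>
  if hp : p ≤ ℓ.length then
    (((p.factorial * (ℓ.length - p).factorial : ℕ) : ℝ))⁻¹ •
      ∑ σ : Equiv.Perm (Fin ℓ.length),
        (((Equiv.Perm.sign σ : ℤ) : ℝ)) •
          (ω (List.ofFn fun m : Fin p => ℓ.get (σ (Fin.castLE hp m))) *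
            ψ (List.ofFn fun m : Fin (ℓ.length - p) =>
                ℓ.get (σ ⟨p + (m : ℕ), by have := m.isLt; omega⟩)))
  else 0

/-- Wedge product of a scalar `p`-form with a vector valued form. -/
def wedgeSV (p : ℕ) (ω : SF A) (K : VF A) : VF A := fun ℓ =>
  if hp : p ≤ ℓ.length then
    (((p.factorial * (ℓ.length - p).factorial : ℕ) : ℝ))⁻¹ •
      ∑ σ : Equiv.Perm (Fin ℓ.length),
        (((Equiv.Perm.sign σ : ℤ) : ℝ)) •
          (ω (List.ofFn fun m : Fin p => ℓ.get (σ (Fin.castLE hp m))) •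
            K (List.ofFn fun m : Fin (ℓ.length - p) =>
                ℓ.get (σ ⟨p + (m : ℕ), by have := m.isLt; omega⟩)))
  else 0

/-- `K ∘ Λh`: precompose each argument of a vector valued form with `h`. -/
def precH (φ : Vec A → Vec A) (K : VF A) : VF A := fun ℓ => K (ℓ.map (hpr A φ))

/-- `h ∘ K`: postcompose the values of a vector valued form with `h`. -/
def postH (φ : Vec A → Vec A) (K : VF A) : VF A := fun ℓ => hpr A φ (K ℓ)

/-- `φ ∘ K`: postcompose the values of a vector valued form with `φ`. -/
def postP (φ : Vec A → Vec A) (K : VF A) : VF A := fun ℓ => φ (K ℓ)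

/-- Equality of vector valued forms (tested on vector fields). -/
def VEq (K L : VF A) : Prop := ∀ ℓ, VFList A ℓ → K ℓ = L ℓ

/-- Equality of operators on `Ω(M)` (tested on genuine forms and vector fields). -/
def OpEq (D₁ D₂ : SF A →ₗ[ℝ] SF A) : Prop :=
  ∀ (p : ℕ) (ω : SF A), IsSForm A p ω → ∀ ℓ, VFList A ℓ → D₁ ω ℓ = D₂ ω ℓ

/-- A scalar form is horizontal: it is killed by insertion of any vertical vector. -/
def HorS (φ : Vec A → Vec A) (ω : SF A) : Prop :=
  ∀ l₁ (Y : Vec A) l₂, IsVectorField A Y → ω (l₁ ++ φ Y :: l₂) = 0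

/-- A vector valued form is horizontal: it is killed by any vertical argument. -/
def HorV (φ : Vec A → Vec A) (K : VF A) : Prop :=
  ∀ l₁ (Y : Vec A) l₂, IsVectorField A Y → K (l₁ ++ φ Y :: l₂) = 0

/-- `K ∈ Ω^k(M;TM)^h`, i.e. `h ∘ K = K ∘ Λ^k h`. -/
def EquivH (φ : Vec A → Vec A) (K : VF A) : Prop :=
  ∀ ℓ, VFList A ℓ → hpr A φ (K ℓ) = K (ℓ.map (hpr A φ))

/-- `D` is a graded derivation of `Ω(M)` over `h*` of degree `k`:
`D(ω ∧ ψ) = Dω ∧ h*ψ + (-1)^{k·|ω|} h*ω ∧ Dψ`. -/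
structure IsDerOverH (φ : Vec A → Vec A) (k : ℕ) (D : SF A →ₗ[ℝ] SF A) : Prop where
  degree : ∀ p ω, IsSForm A p ω → IsSForm A (p + k) (D ω)
  leibniz : ∀ (p q : ℕ) (ω ψ : SF A), IsSForm A p ω → IsSForm A q ψ →
    D (wedgeSS A p ω ψ) = wedgeSS A (p + k) (D ω) (hstar A φ ψ)
      + ((-1 : ℝ) ^ (k * p)) • wedgeSS A p (hstar A φ ω) (D ψ)

/-- `D` commutes with `h*` (i.e. `[D, h*] = 0` on `Ω(M)`). -/
def CommutesWithHstar (φ : Vec A → Vec A) (D : SF A →ₗ[ℝ] SF A) : Prop :=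
  ∀ (p : ℕ) (ω : SF A), IsSForm A p ω → ∀ ℓ, VFList A ℓ →
    D (hstar A φ ω) ℓ = hstar A φ (D ω) ℓ

/-- `D` is algebraic: it vanishes on `Ω⁰(M)`. -/
def AlgebraicDer (D : SF A →ₗ[ℝ] SF A) : Prop := ∀ ω : SF A, IsSForm A 0 ω → D ω = 0

/-- The bracket `[K,L]^{∧,h} = i^h(K)L - (-1)^{kl} i^h(L)K` on `Ω^{*+1}(M;TM)^h`,
for `K ∈ Ω^{k+1}(M;TM)^h` and `L ∈ Ω^{l+1}(M;TM)^h`. -/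
def hookBr (φ : Vec A → Vec A) (k l : ℕ) (K L : VF A) : VF A :=
  insHVV A φ (k + 1) K L - ((-1 : ℝ) ^ (k * l)) • insHVV A φ (l + 1) L K

/-- The classical covariant derivative `D^h = h* ∘ d`. -/
def covD (φ : Vec A → Vec A) : SF A →ₗ[ℝ] SF A := hstar A φ ∘ₗ extd A

/-- The covariant derivative `d^h = h* ∘ d ∘ h*`. -/
def covd (φ : Vec A → Vec A) : SF A →ₗ[ℝ] SF A := hstar A φ ∘ₗ extd A ∘ₗ hstar A φ

end
section MichorAux

variable {A : Type*} [CommRing A] [Algebra ℝ A]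

lemma vf_zero : IsVectorField A 0 := by intro f g; simp

lemma vf_add {X Y : Vec A} (hX : IsVectorField A X) (hY : IsVectorField A Y) :
    IsVectorField A (X + Y) := by
  intro f g
  simp only [LinearMap.add_apply, hX f g, hY f g]
  ring

lemma vf_neg {X : Vec A} (hX : IsVectorField A X) : IsVectorField A (-X) := by
  intro f g
  simp only [LinearMap.neg_apply, hX f g]
  ring

lemma vf_sub {X Y : Vec A} (hX : IsVectorField A X) (hY : IsVectorField A Y) :
    IsVectorField A (X - Y) := by
  simpa [sub_eq_add_neg] using vf_add hX (vf_neg hY)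

variable {φ : Vec A → Vec A}

lemma conn_zero (hφ : IsConnection A φ) : φ 0 = 0 := by
  have h := hφ.map_smul (0 : A) 0 vf_zero
  simpa using h

lemma conn_neg (hφ : IsConnection A φ) {X : Vec A} (hX : IsVectorField A X) :
    φ (-X) = -φ X := by
  have h := hφ.map_add X (-X) hX (vf_neg hX)
  rw [add_neg_cancel, conn_zero hφ] at h
  exact (neg_eq_of_add_eq_zero_right h.symm).symm

lemma vf_h (hφ : IsConnection A φ) {X : Vec A} (hX : IsVectorField A X) :
    IsVectorField A (hpr A φ X) :=
  vf_sub hX (hφ.vf X hX)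

lemma h_zero (hφ : IsConnection A φ) : hpr A φ 0 = 0 := by
  simp [hpr, conn_zero hφ]

lemma h_idem (hφ : IsConnection A φ) {X : Vec A} (hX : IsVectorField A X) :
    hpr A φ (hpr A φ X) = hpr A φ X := by
  have h1 : φ (hpr A φ X) = 0 := by
    have : φ (X + -(φ X)) = φ X + φ (-(φ X)) :=
      hφ.map_add X (-(φ X)) hX (vf_neg (hφ.vf X hX))
    rw [conn_neg hφ (hφ.vf X hX), hφ.idem X hX] at this
    simpa [hpr, sub_eq_add_neg] using this
  simp only [hpr] at h1 ⊢
  rw [h1, sub_zero]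

lemma vfl_nil : VFList A [] := by intro X hX; simp at hX

lemma vfl_cons {X : Vec A} {l : List (Vec A)} (hX : IsVectorField A X) (hl : VFList A l) :
    VFList A (X :: l) := by
  intro Y hY
  rcases List.mem_cons.1 hY with h | h
  · subst h; exact hX
  · exact hl Y h

lemma vfl_append {l₁ l₂ : List (Vec A)} (h₁ : VFList A l₁) (h₂ : VFList A l₂) :
    VFList A (l₁ ++ l₂) := by
  intro Y hY
  rcases List.mem_append.1 hY with h | h
  · exact h₁ Y h
  · exact h₂ Y h

lemma vfl_subset {l m : List (Vec A)} (hs : l ⊆ m) (hm : VFList A m) : VFList A l :=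
  fun Y hY => hm Y (hs hY)

lemma vfl_map_h (hφ : IsConnection A φ) {l : List (Vec A)} (hl : VFList A l) :
    VFList A (l.map (hpr A φ)) := by
  intro Y hY
  rcases List.mem_map.1 hY with ⟨X, hX, rfl⟩
  exact vf_h hφ (hl X hX)

lemma vfl_ofFn {n : ℕ} {g : Fin n → Vec A} (hg : ∀ i, IsVectorField A (g i)) :
    VFList A (List.ofFn g) := by
  intro Y hY
  rcases List.mem_ofFn.1 hY with ⟨i, rfl⟩
  exact hg i

end MichorAux
section MichorAux1b

variable {A : Type*} [CommRing A] [Algebra ℝ A] {φ : Vec A → Vec A}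

lemma h_add (hφ : IsConnection A φ) {X Y : Vec A} (hX : IsVectorField A X)
    (hY : IsVectorField A Y) : hpr A φ (X + Y) = hpr A φ X + hpr A φ Y := by
  simp only [hpr, hφ.map_add X Y hX hY]
  abel

lemma h_smul (hφ : IsConnection A φ) (g : A) {X : Vec A} (hX : IsVectorField A X) :
    hpr A φ (g • X) = g • hpr A φ X := by
  simp only [hpr, hφ.map_smul g X hX, smul_sub]

end MichorAux1b
section MichorAux2

variable {A : Type*} [CommRing A] [Algebra ℝ A]

lemma val_swap {n : ℕ} (u v w : Fin n) :
    ((Equiv.swap u v w : Fin n) : ℕ) =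
      if (w : ℕ) = (u : ℕ) then (v : ℕ) else if (w : ℕ) = (v : ℕ) then (u : ℕ) else (w : ℕ) := by
  rw [Equiv.swap_apply_def]
  split_ifs with h1 h2 h3 h4 h5 <;> simp_all [Fin.ext_iff]

lemma vform_polar {p : ℕ} {K : VF A} (hK : IsVForm A p K)
    (l₁ l₂ l₃ : List (Vec A)) (X Y : Vec A)
    (h₁ : VFList A l₁) (h₂ : VFList A l₂) (h₃ : VFList A l₃)
    (hX : IsVectorField A X) (hY : IsVectorField A Y) :
    K (l₁ ++ X :: l₂ ++ Y :: l₃) = -K (l₁ ++ Y :: l₂ ++ X :: l₃) := by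
  have hXY : IsVectorField A (X + Y) := vf_add hX hY
  have t0 : K (l₁ ++ (X + Y) :: l₂ ++ (X + Y) :: l₃) = 0 :=
    hK.alternate l₁ (X + Y) l₂ l₃ h₁ h₂ h₃ hXY
  have e1 : K (l₁ ++ (X + Y) :: l₂ ++ (X + Y) :: l₃)
      = K (l₁ ++ X :: l₂ ++ (X + Y) :: l₃) + K (l₁ ++ Y :: l₂ ++ (X + Y) :: l₃) := by
    have h := hK.map_add l₁ X Y (l₂ ++ (X + Y) :: l₃) h₁ (vfl_append h₂ (vfl_cons hXY h₃)) hX hY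
    simpa [List.append_assoc] using h
  have e2 : K (l₁ ++ X :: l₂ ++ (X + Y) :: l₃)
      = K (l₁ ++ X :: l₂ ++ X :: l₃) + K (l₁ ++ X :: l₂ ++ Y :: l₃) := by
    have h := hK.map_add (l₁ ++ X :: l₂) X Y l₃
      (vfl_append h₁ (vfl_cons hX h₂)) h₃ hX hY
    simpa [List.append_assoc] using h
  have e3 : K (l₁ ++ Y :: l₂ ++ (X + Y) :: l₃)
      = K (l₁ ++ Y :: l₂ ++ X :: l₃) + K (l₁ ++ Y :: l₂ ++ Y :: l₃) := by
    have h := hK.map_add (l₁ ++ Y :: l₂) X Y l₃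
      (vfl_append h₁ (vfl_cons hY h₂)) h₃ hX hY
    simpa [List.append_assoc] using h
  have a1 : K (l₁ ++ X :: l₂ ++ X :: l₃) = 0 := hK.alternate l₁ X l₂ l₃ h₁ h₂ h₃ hX
  have a2 : K (l₁ ++ Y :: l₂ ++ Y :: l₃) = 0 := hK.alternate l₁ Y l₂ l₃ h₁ h₂ h₃ hY
  rw [e1, e2, e3, a1, a2] at t0
  rw [zero_add, add_zero] at t0
  exact add_eq_zero_iff_eq_neg.mp t0

end MichorAux2
section MichorAux3

variable {A : Type*} [CommRing A] [Algebra ℝ A]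

lemma getElem_idx_congr {α : Type*} (l : List α) {i j : ℕ} (h : i = j) (hi : i < l.length) :
    l[i] = l[j]'(h ▸ hi) := by subst h; rfl

lemma val_swap_mk {n a b i : ℕ} (ha : a < n) (hb : b < n) (hi : i < n) :
    ((Equiv.swap ⟨a, ha⟩ ⟨b, hb⟩ (⟨i, hi⟩ : Fin n) : Fin n) : ℕ) =
      if i = a then b else if i = b then a else i := by
  rw [Equiv.swap_apply_def]
  split_ifs with h1 h2 h3 h4 h5 <;> simp_all [Fin.ext_iff]

lemma len_two_mid {α : Type*} (l₁ l₂ l₃ : List α) (U V : α) :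
    (l₁ ++ (U :: l₂) ++ (V :: l₃)).length
      = l₁.length + 1 + l₂.length + 1 + l₃.length := by
  simp [List.length_append]; omega

variable {α : Type*} {l₁ l₂ l₃ : List α} {n₁ n₂ : ℕ}

lemma gtm₁ (e₁ : l₁.length = n₁) (U V : α) {i : ℕ} (hi : i < n₁)
    (h : i < (l₁ ++ (U :: l₂) ++ (V :: l₃)).length) :
    (l₁ ++ (U :: l₂) ++ (V :: l₃))[i] = l₁[i]'(by omega) := by
  rw [List.getElem_append_left (by simp [List.length_append]; omega : i < (l₁ ++ (U :: l₂)).length),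
    List.getElem_append_left (by omega : i < l₁.length)]

lemma gtm₂ (e₁ : l₁.length = n₁) (U V : α) {i : ℕ} (hi : i = n₁)
    (h : i < (l₁ ++ (U :: l₂) ++ (V :: l₃)).length) :
    (l₁ ++ (U :: l₂) ++ (V :: l₃))[i] = U := by
  rw [List.getElem_append_left (by simp [List.length_append]; omega : i < (l₁ ++ (U :: l₂)).length),
    List.getElem_append_right (by omega : l₁.length ≤ i),
    getElem_idx_congr _ (show i - l₁.length = 0 from by omega), List.getElem_cons_zero]

lemma gtm₃ (e₁ : l₁.length = n₁) (e₂ : l₂.length = n₂) (U V : α) {i : ℕ}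
    (hi1 : n₁ < i) (hi2 : i < n₁ + 1 + n₂)
    (h : i < (l₁ ++ (U :: l₂) ++ (V :: l₃)).length) :
    (l₁ ++ (U :: l₂) ++ (V :: l₃))[i] = l₂[i - n₁ - 1]'(by omega) := by
  rw [List.getElem_append_left (by simp [List.length_append]; omega : i < (l₁ ++ (U :: l₂)).length),
    List.getElem_append_right (by omega : l₁.length ≤ i), List.getElem_cons,
    dif_neg (show ¬ (i - l₁.length = 0) from by omega)]
  exact getElem_idx_congr _ (by omega) _

lemma gtm₄ (e₁ : l₁.length = n₁) (e₂ : l₂.length = n₂) (U V : α) {i : ℕ}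
    (hi : i = n₁ + 1 + n₂)
    (h : i < (l₁ ++ (U :: l₂) ++ (V :: l₃)).length) :
    (l₁ ++ (U :: l₂) ++ (V :: l₃))[i] = V := by
  have h12 : (l₁ ++ (U :: l₂)).length = n₁ + 1 + n₂ := by
    simp [List.length_append]; omega
  rw [List.getElem_append_right (by omega : (l₁ ++ (U :: l₂)).length ≤ i),
    getElem_idx_congr _ (show i - (l₁ ++ (U :: l₂)).length = 0 from by omega),
    List.getElem_cons_zero]

lemma gtm₅ (e₁ : l₁.length = n₁) (e₂ : l₂.length = n₂) (U V : α) {i : ℕ}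
    (hi : n₁ + 1 + n₂ < i)
    (h : i < (l₁ ++ (U :: l₂) ++ (V :: l₃)).length) :
    (l₁ ++ (U :: l₂) ++ (V :: l₃))[i]
      = l₃[i - n₁ - 1 - n₂ - 1]'(by rw [len_two_mid] at h; omega) := by
  have h12 : (l₁ ++ (U :: l₂)).length = n₁ + 1 + n₂ := by
    simp [List.length_append]; omega
  rw [List.getElem_append_right (by omega : (l₁ ++ (U :: l₂)).length ≤ i),
    List.getElem_cons, dif_neg (show ¬ (i - (l₁ ++ (U :: l₂)).length = 0) from by omega)]
  exact getElem_idx_congr _ (by omega) _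

lemma swap_core {p : ℕ} {K : VF A} (hK : IsVForm A p K)
    (m : List (Vec A)) (hm : VFList A m) {a b : ℕ}
    (ha : a < m.length) (hb : b < m.length) (hab : a < b) :
    K (List.ofFn fun i : Fin m.length => m.get (Equiv.swap ⟨a, ha⟩ ⟨b, hb⟩ i)) = -K m := by
  have e₁ : (m.take a).length = a := by rw [List.length_take]; omega
  have e₂ : ((m.drop (a + 1)).take (b - (a + 1))).length = b - (a + 1) := by
    rw [List.length_take, List.length_drop]; omega
  have hd2 : m.drop (a + 1)
      = (m.drop (a + 1)).take (b - (a + 1)) ++ (m[b] :: m.drop (b + 1)) := by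
    conv_lhs => rw [← List.take_append_drop (b - (a + 1)) (m.drop (a + 1))]
    rw [List.drop_drop, show (a + 1) + (b - (a + 1)) = b from by omega,
      List.drop_eq_getElem_cons hb]
  have hdec : m = m.take a ++ (m[a] :: (m.drop (a + 1)).take (b - (a + 1)))
      ++ (m[b] :: m.drop (b + 1)) := by
    conv_lhs => rw [← List.take_append_drop a m, List.drop_eq_getElem_cons ha, hd2]
    rw [List.append_assoc, List.cons_append]
  have hswp : (List.ofFn fun i : Fin m.length => m.get (Equiv.swap ⟨a, ha⟩ ⟨b, hb⟩ i))
      = m.take a ++ (m[b] :: (m.drop (a + 1)).take (b - (a + 1)))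
        ++ (m[a] :: m.drop (b + 1)) := by
    apply List.ext_getElem
    · rw [List.length_ofFn, len_two_mid, e₁, e₂, List.length_drop]; omega
    · intro i h1 h2
      rw [List.getElem_ofFn]
      simp only [List.get_eq_getElem]
      rcases lt_trichotomy i a with c1 | c1 | c1
      · rw [gtm₁ e₁ _ _ c1 h2, List.getElem_take]
        exact getElem_idx_congr m (by rw [val_swap_mk]; split_ifs <;> omega) _
      · rw [gtm₂ e₁ _ _ c1 h2]
        exact getElem_idx_congr m (by rw [val_swap_mk]; split_ifs <;> omega) _
      · rcases lt_trichotomy i b with c2 | c2 | c2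
        · rw [gtm₃ e₁ e₂ _ _ c1 (by omega) h2, List.getElem_take, List.getElem_drop]
          exact getElem_idx_congr m (by rw [val_swap_mk]; split_ifs <;> omega) _
        · rw [gtm₄ e₁ e₂ _ _ (by omega) h2]
          exact getElem_idx_congr m (by rw [val_swap_mk]; split_ifs <;> omega) _
        · rw [gtm₅ e₁ e₂ _ _ (by omega) h2, List.getElem_drop]
          exact getElem_idx_congr m (by rw [val_swap_mk]; split_ifs <;> omega) _
  have hX : IsVectorField A m[a] := hm _ (List.getElem_mem ha)
  have hY : IsVectorField A m[b] := hm _ (List.getElem_mem hb)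
  have h₁ : VFList A (m.take a) := vfl_subset (List.take_subset a m) hm
  have h₂ : VFList A ((m.drop (a + 1)).take (b - (a + 1))) := vfl_subset
    (List.Subset.trans (List.take_subset _ _) (List.drop_subset _ m)) hm
  have h₃ : VFList A (m.drop (b + 1)) := vfl_subset (List.drop_subset _ m) hm
  rw [hswp]
  have hpol := vform_polar hK (m.take a) ((m.drop (a + 1)).take (b - (a + 1)))
    (m.drop (b + 1)) m[b] m[a] h₁ h₂ h₃ hY hX
  rw [hpol, ← hdec]

end MichorAux3
section MichorAux4

variable {A : Type*} [CommRing A] [Algebra ℝ A]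

lemma swap_gen {p : ℕ} {K : VF A} (hK : IsVForm A p K)
    (m : List (Vec A)) (hm : VFList A m) (x y : Fin m.length) (hxy : x ≠ y) :
    K (List.ofFn fun i => m.get (Equiv.swap x y i)) = -K m := by
  have hv : (x : ℕ) ≠ (y : ℕ) := fun h => hxy (Fin.ext h)
  rcases lt_or_gt_of_ne hv with h | h
  · have := swap_core hK m hm x.isLt y.isLt h
    simpa using this
  · have := swap_core hK m hm y.isLt x.isLt h
    rw [Equiv.swap_comm]
    simpa using this

lemma vform_perm {p : ℕ} {K : VF A} (hK : IsVForm A p K)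
    (m : List (Vec A)) (hm : VFList A m) (σ : Equiv.Perm (Fin m.length)) :
    K (List.ofFn fun i => m.get (σ i)) = (Equiv.Perm.sign σ : ℤ) • K m := by
  refine Equiv.Perm.swap_induction_on' σ ?_ ?_
  · simp [List.ofFn_get]
  · intro f x y hxy ih
    have hm' : VFList A (List.ofFn fun i => m.get (f i)) :=
      vfl_ofFn fun i => hm _ (List.get_mem m _)
    have hxl : (x : ℕ) < (List.ofFn fun t => m.get (f t)).length := by
      simpa using x.isLt
    have hyl : (y : ℕ) < (List.ofFn fun t => m.get (f t)).length := by
      simpa using y.isLt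
    have key : (List.ofFn fun i => m.get ((f * Equiv.swap x y) i))
        = List.ofFn fun i : Fin (List.ofFn fun t => m.get (f t)).length =>
            (List.ofFn fun t => m.get (f t)).get
              (Equiv.swap ⟨(x : ℕ), hxl⟩ ⟨(y : ℕ), hyl⟩ i) := by
      apply List.ext_getElem
      · simp
      · intro i h1 h2
        have h1' : i < m.length := by simpa using h1
        simp only [List.getElem_ofFn, List.get_eq_getElem, Equiv.Perm.mul_apply]
        have hval : ((Equiv.swap (⟨(x : ℕ), hxl⟩ : Fin _) ⟨(y : ℕ), hyl⟩
              ⟨i, by simpa using h1'⟩ : Fin (List.ofFn fun t => m.get (f t)).length) : ℕ)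
            = ((Equiv.swap x y ⟨i, h1'⟩ : Fin m.length) : ℕ) := by
          rw [val_swap_mk, val_swap_mk x.isLt y.isLt h1']
        have hfin : (Equiv.swap x y ⟨i, h1'⟩ : Fin m.length)
            = ⟨((Equiv.swap (⟨(x : ℕ), hxl⟩ : Fin _) ⟨(y : ℕ), hyl⟩
                ⟨i, by simpa using h1'⟩ : Fin (List.ofFn fun t => m.get (f t)).length) : ℕ),
                by rw [hval]; exact (Equiv.swap x y ⟨i, h1'⟩).isLt⟩ :=
          Fin.ext hval.symm
        exact congrArg (fun z : Fin m.length => m.get (f z)) hfin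
    rw [key, swap_gen hK _ hm' ⟨(x : ℕ), hxl⟩ ⟨(y : ℕ), hyl⟩
        (by simp [Fin.ext_iff]; exact fun h => hxy (Fin.ext h)), ih]
    have hs : ((Equiv.Perm.sign (f * Equiv.swap x y) : ℤˣ) : ℤ)
        = -((Equiv.Perm.sign f : ℤˣ) : ℤ) := by
      rw [Equiv.Perm.sign_mul, Equiv.Perm.sign_swap hxy]
      push_cast
      ring
    rw [hs, neg_smul]

end MichorAux4
section MichorAux5

variable {A : Type*} [CommRing A] [Algebra ℝ A]

/-- The evaluation 1-form `X ↦ X f`. -/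
def evalF (f : A) : SF A := fun ℓ => match ℓ with
  | [X] => X f
  | _ => 0

lemma evalF_support (f : A) : ∀ ℓ : List (Vec A), ℓ.length ≠ 1 → evalF f ℓ = 0 := by
  intro ℓ h
  match ℓ with
  | [] => rfl
  | [X] => simp at h
  | a :: b :: t => rfl

lemma evalF_isSForm (f : A) : IsSForm A 1 (evalF (A := A) f) := by
  constructor
  · exact evalF_support f
  · intro l₁ X Y l₂ _ _ _ _
    rcases l₁ with _ | ⟨a, l₁⟩
    · rcases l₂ with _ | ⟨b, l₂⟩
      · simp [evalF]
      · rw [evalF_support f _ (by simp), evalF_support f _ (by simp),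
          evalF_support f _ (by simp)]
        ring
    · rw [evalF_support f _ (by simp), evalF_support f _ (by simp),
        evalF_support f _ (by simp)]
      ring
  · intro l₁ g X l₂ _ _ _
    rcases l₁ with _ | ⟨a, l₁⟩
    · rcases l₂ with _ | ⟨b, l₂⟩
      · simp [evalF]
      · rw [evalF_support f _ (by simp), evalF_support f _ (by simp)]
        ring
    · rw [evalF_support f _ (by simp), evalF_support f _ (by simp)]
      ring
  · intro l₁ X l₂ l₃ _ _ _ _
    exact evalF_support f _ (by simp; omega)

lemma sform_zero {p : ℕ} {ω : SF A} (hω : IsSForm A p ω) :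
    ω [(0 : Vec A)] = 0 := by
  have h := hω.map_smul [] (0 : A) 0 [] vfl_nil vfl_nil vf_zero
  simpa using h

lemma sform_neg {p : ℕ} {ω : SF A} (hω : IsSForm A p ω) (v : Vec A)
    (hv : IsVectorField A v) : ω [-v] = -ω [v] := by
  have h := hω.map_add [] v (-v) [] vfl_nil vfl_nil hv (vf_neg hv)
  rw [show v + -v = 0 from add_neg_cancel v] at h
  simp only [List.nil_append] at h
  rw [sform_zero hω] at h
  exact eq_neg_of_add_eq_zero_right h.symm

lemma hstar_isSForm {φ : Vec A → Vec A} (hφ : IsConnection A φ) {p : ℕ} {ω : SF A}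
    (hω : IsSForm A p ω) : IsSForm A p (hstar A φ ω) := by
  have happ : ∀ ℓ : List (Vec A), hstar A φ ω ℓ = ω (ℓ.map (hpr A φ)) := fun ℓ => rfl
  constructor
  · intro ℓ h
    rw [happ]
    exact hω.support _ (by simpa using h)
  · intro l₁ X Y l₂ h₁ h₂ hX hY
    rw [happ, happ, happ]
    simp only [List.map_append, List.map_cons]
    rw [h_add hφ hX hY]
    exact hω.map_add _ _ _ _ (vfl_map_h hφ h₁) (vfl_map_h hφ h₂) (vf_h hφ hX) (vf_h hφ hY)
  · intro l₁ g X l₂ h₁ h₂ hX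
    rw [happ, happ]
    simp only [List.map_append, List.map_cons]
    rw [h_smul hφ g hX]
    exact hω.map_smul _ _ _ _ (vfl_map_h hφ h₁) (vfl_map_h hφ h₂) (vf_h hφ hX)
  · intro l₁ X l₂ l₃ h₁ h₂ h₃ hX
    rw [happ]
    simp only [List.map_append, List.map_cons]
    exact hω.alternate _ _ _ _ (vfl_map_h hφ h₁) (vfl_map_h hφ h₂) (vfl_map_h hφ h₃)
      (vf_h hφ hX)

end MichorAux5
section MichorAux6

variable {A : Type*} [CommRing A] [Algebra ℝ A]

lemma insH_apply_len (φ : Vec A → Vec A) (k : ℕ) (K : VF A) (ω : SF A)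
    {n : ℕ} (ℓ : List (Vec A)) (hn : ℓ.length = n) (hk : k ≤ n) :
    insH A φ k K ω ℓ = (((k.factorial * (n - k).factorial : ℕ) : ℝ))⁻¹ •
      ∑ σ : Equiv.Perm (Fin n), (((Equiv.Perm.sign σ : ℤ) : ℝ)) •
        ω (K (List.ofFn fun m : Fin k =>
            ℓ.get (Fin.cast hn.symm (σ (Fin.castLE hk m)))) ::
          List.ofFn fun m : Fin (n - k) =>
            hpr A φ (ℓ.get (Fin.cast hn.symm (σ ⟨k + (m : ℕ), by have := m.isLt; omega⟩)))) := by
  subst hn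
  simp only [insH, LinearMap.pi_apply, dif_pos hk, LinearMap.smul_apply, LinearMap.sum_apply,
    LinearMap.proj_apply]
  rfl

lemma insH_apply_of_lt (φ : Vec A → Vec A) (k : ℕ) (K : VF A) (ω : SF A)
    (ℓ : List (Vec A)) (hk : ¬ k ≤ ℓ.length) : insH A φ k K ω ℓ = 0 := by
  simp only [insH, LinearMap.pi_apply, dif_neg hk]
  rfl

lemma insH_eval_top (φ : Vec A → Vec A) (hφ : IsConnection A φ) {k : ℕ} {K : VF A}
    (hK : IsVForm A (k + 1) K) {ω : SF A} {p : ℕ} (hω : IsSForm A p ω)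
    (ℓ : List (Vec A)) (hℓ : VFList A ℓ) (hlen : ℓ.length = k + 1) :
    insH A φ (k + 1) K ω ℓ = ω [K ℓ] := by
  rw [insH_apply_len φ (k + 1) K ω ℓ hlen le_rfl]
  have hterm : ∀ σ : Equiv.Perm (Fin (k + 1)),
      (((Equiv.Perm.sign σ : ℤ) : ℝ)) •
        ω (K (List.ofFn fun m : Fin (k + 1) =>
            ℓ.get (Fin.cast hlen.symm (σ (Fin.castLE le_rfl m)))) ::
          List.ofFn fun m : Fin (k + 1 - (k + 1)) =>
            hpr A φ (ℓ.get (Fin.cast hlen.symm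
              (σ ⟨k + 1 + (m : ℕ), by have := m.isLt; omega⟩))))
      = ω [K ℓ] := by
    intro σ
    have hT : (List.ofFn fun m : Fin (k + 1 - (k + 1)) =>
        hpr A φ (ℓ.get (Fin.cast hlen.symm
          (σ ⟨k + 1 + (m : ℕ), by have := m.isLt; omega⟩)))) = [] :=
      List.eq_nil_of_length_eq_zero (by simp)
    set σ' : Equiv.Perm (Fin ℓ.length) := (finCongr hlen.symm).permCongr σ with hσ'
    have hP : (List.ofFn fun m : Fin (k + 1) =>
        ℓ.get (Fin.cast hlen.symm (σ (Fin.castLE le_rfl m))))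
        = List.ofFn fun i : Fin ℓ.length => ℓ.get (σ' i) := by
      apply List.ext_getElem
      · simp [hlen]
      · intro i h1 h2
        simp only [List.getElem_ofFn]
        rfl
    have hsign : Equiv.Perm.sign σ' = Equiv.Perm.sign σ := by
      rw [hσ']
      exact Equiv.Perm.sign_permCongr _ _
    rw [hT, hP, vform_perm hK ℓ hℓ σ', hsign]
    rcases Int.units_eq_one_or (Equiv.Perm.sign σ) with h | h <;> rw [h]
    · simp
    · rw [show ((((-1 : ℤˣ) : ℤ)) : ℝ) = -1 from by norm_num,
        show (((-1 : ℤˣ) : ℤ)) = -1 from rfl, neg_one_zsmul]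
      rw [sform_neg hω (K ℓ) (hK.vec ℓ hℓ)]
      simp
  rw [Finset.sum_congr rfl (fun σ _ => hterm σ), Finset.sum_const]
  simp only [Finset.card_univ, Fintype.card_perm, Fintype.card_fin]
  rw [Nat.sub_self, Nat.factorial_zero, mul_one, ← Nat.cast_smul_eq_nsmul ℝ, smul_smul,
    inv_mul_cancel₀ (Nat.cast_ne_zero.mpr (Nat.factorial_ne_zero _)), one_smul]

end MichorAux6
section MichorAux7

variable {A : Type*} [CommRing A] [Algebra ℝ A]

lemma key_term {φ : Vec A → Vec A} (hφ : IsConnection A φ) {K : VF A}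
    (hV : VEq A (postH A φ K) (precH A φ K)) (ω : SF A)
    {a b : ℕ} (g : Fin a → Vec A) (t : Fin b → Vec A)
    (hg : ∀ i, IsVectorField A (g i)) :
    hstar A φ ω (K (List.ofFn g) :: List.ofFn fun i => hpr A φ (t i))
      = ω (K (List.ofFn fun i => hpr A φ (g i)) ::
          List.ofFn fun i => hpr A φ (hpr A φ (t i))) := by
  have h0 : hstar A φ ω (K (List.ofFn g) :: List.ofFn fun i => hpr A φ (t i))
      = ω ((K (List.ofFn g) :: List.ofFn fun i => hpr A φ (t i)).map (hpr A φ)) := rfl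
  have e : hpr A φ (K (List.ofFn g)) = K ((List.ofFn g).map (hpr A φ)) :=
    hV (List.ofFn g) (vfl_ofFn hg)
  rw [h0, List.map_cons, e, List.map_ofFn, List.map_ofFn]
  rfl

end MichorAux7
/-- The commutative `ℝ`-algebra of smooth real valued functions on a manifold `M`. -/
abbrev SmoothFns {EM : Type*} [NormedAddCommGroup EM] [NormedSpace ℝ EM]
    {HM : Type*} [TopologicalSpace HM] (IM : ModelWithCorners ℝ EM HM)
    (M : Type*) [TopologicalSpace M] [ChartedSpace HM M] : Type _ :=
  ContMDiffMap IM (modelWithCornersSelf ℝ ℝ) M ℝ (⊤ : ℕ∞)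

/-- **Lemma 2.3.2.**  For `K ∈ Ω^{k+1}(M;TM)`, the operator `i^h(K)` commutes with `h*`,
i.e. `[i^h(K), h*] = 0`, if and only if `h ∘ K = K ∘ Λ^{k+1}h`. -/
theorem insH_commutes_with_hstar_iff
    {EM : Type*} [NormedAddCommGroup EM] [NormedSpace ℝ EM]
    {HM : Type*} [TopologicalSpace HM] {IM : ModelWithCorners ℝ EM HM}
    {M : Type*} [TopologicalSpace M] [ChartedSpace HM M] [IsManifold IM (⊤ : ℕ∞) M]
    (φ : Vec (SmoothFns IM M) → Vec (SmoothFns IM M))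
    (hφ : IsConnection (SmoothFns IM M) φ)
    (k : ℕ) (K : VF (SmoothFns IM M)) (hK : IsVForm (SmoothFns IM M) (k + 1) K) :
    (∀ (p : ℕ) (ω : SF (SmoothFns IM M)), IsSForm (SmoothFns IM M) p ω → ∀ ℓ, VFList (SmoothFns IM M) ℓ →
        insH (SmoothFns IM M) φ (k + 1) K (hstar (SmoothFns IM M) φ ω) ℓ = hstar (SmoothFns IM M) φ (insH (SmoothFns IM M) φ (k + 1) K ω) ℓ)
      ↔ VEq (SmoothFns IM M) (postH (SmoothFns IM M) φ K) (precH (SmoothFns IM M) φ K) := by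
  set A := SmoothFns IM M
  constructor
  · intro H ℓ hℓ
    by_cases hlen : ℓ.length = k + 1
    · show hpr A φ (K ℓ) = K (ℓ.map (hpr A φ))
      apply LinearMap.ext
      intro f
      have h1 := evalF_isSForm (A := A) f
      have hc := H 1 (evalF f) h1 ℓ hℓ
      rw [insH_eval_top φ hφ hK (hstar_isSForm hφ h1) ℓ hℓ hlen] at hc
      have hR : hstar A φ (insH A φ (k + 1) K (evalF f)) ℓ
          = insH A φ (k + 1) K (evalF f) (ℓ.map (hpr A φ)) := rfl
      rw [hR, insH_eval_top φ hφ hK h1 (ℓ.map (hpr A φ)) (vfl_map_h hφ hℓ)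
        (by simp [hlen])] at hc
      exact hc
    · show hpr A φ (K ℓ) = K (ℓ.map (hpr A φ))
      rw [hK.support ℓ hlen, h_zero hφ, hK.support _ (by simpa using hlen)]
  · intro hV p ω hω ℓ hℓ
    have hR : hstar A φ (insH A φ (k + 1) K ω) ℓ
        = insH A φ (k + 1) K ω (ℓ.map (hpr A φ)) := rfl
    rw [hR]
    by_cases hk : k + 1 ≤ ℓ.length
    · rw [insH_apply_len φ (k + 1) K (hstar A φ ω) ℓ rfl hk,
        insH_apply_len φ (k + 1) K ω (ℓ.map (hpr A φ)) (List.length_map (as := ℓ) _) hk]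
      congr 1
      refine Finset.sum_congr rfl fun σ _ => ?_
      congr 1
      refine (key_term hφ hV ω
        (fun m : Fin (k + 1) =>
          ℓ.get (Fin.cast (rfl : ℓ.length = ℓ.length).symm (σ (Fin.castLE hk m))))
        (fun m : Fin (ℓ.length - (k + 1)) =>
          ℓ.get (Fin.cast (rfl : ℓ.length = ℓ.length).symm
            (σ ⟨k + 1 + (m : ℕ), by have := m.isLt; omega⟩)))
        (fun i => hℓ _ (List.get_mem ℓ _))).trans ?_
      refine congrArg ω ?_
      refine congrArg₂ List.cons (congrArg K ?_) ?_
      · refine congrArg List.ofFn (funext fun m => ?_)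
        simp [List.get_eq_getElem, List.getElem_map, Fin.coe_cast]
        rfl
      · refine congrArg List.ofFn (funext fun m => ?_)
        simp [List.get_eq_getElem, List.getElem_map, Fin.coe_cast]
        rfl
    · rw [insH_apply_of_lt φ (k + 1) K (hstar A φ ω) ℓ hk,
        insH_apply_of_lt φ (k + 1) K ω (ℓ.map (hpr A φ)) (by simpa using hk)]
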